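/- On a stably compact space X, the pair of maps ϖ₁ : L ↦ ↑L and ϖ₂ : L ↦ ↓L from the space of lenses (with the Vietoris topology) to the Smyth hyperspace and the Hoare hyperspace respectively are continuous, where for a lens L the downward closure ↓L equals the topological closure cl(L). -/

import Mathlib

open Set ENNReal TopologicalSpace MeasureTheory

/-- The specialization preorder: `x ≤ y` iff every open set containing `x`
contains `y`. -/
def SpecLE {X : Type*} [TopologicalSpace X] (x y : X) : Prop :=
  ∀ U : Set X, IsOpen U → x ∈ U → y ∈ U

/-- A set is saturated iff it is upwards closed in the specialization
preorder (equivalently, an intersection of open sets). -/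
def IsSaturated {X : Type*} [TopologicalSpace X] (Q : Set X) : Prop :=
  ∀ ⦃x y : X⦄, SpecLE x y → x ∈ Q → y ∈ Q

/-- The Smyth hyperspace: nonempty compact saturated subsets of `X`. -/
def Smyth (X : Type*) [TopologicalSpace X] :=
  {Q : Set X // IsCompact Q ∧ IsSaturated Q ∧ Q.Nonempty}

/-- The upper Vietoris topology on the Smyth hyperspace, generated by the
basic open sets `□U = {Q | Q ⊆ U}`, `U` open. -/
instance Smyth.topology (X : Type*) [TopologicalSpace X] :
    TopologicalSpace (Smyth X) :=
  TopologicalSpace.generateFrom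
    {s | ∃ U : Set X, IsOpen U ∧ s = {Q : Smyth X | Q.1 ⊆ U}}

/-- The Hoare hyperspace: nonempty closed subsets of `X`, with the lower
Vietoris topology generated by `◇U = {C | C ∩ U ≠ ∅}`, `U` open. -/
def Hoare (X : Type*) [TopologicalSpace X] :=
  {C : Set X // IsClosed C ∧ C.Nonempty}

instance Hoare.topology (X : Type*) [TopologicalSpace X] :
    TopologicalSpace (Hoare X) :=
  TopologicalSpace.generateFrom
    {s | ∃ U : Set X, IsOpen U ∧ s = {C : Hoare X | (C.1 ∩ U).Nonempty}}

/-- A lens on `X`: a nonempty set of the form `Q ∩ C` with `Q` compact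
saturated and `C` closed. -/
def IsLens {X : Type*} [TopologicalSpace X] (L : Set X) : Prop :=
  L.Nonempty ∧ ∃ Q C : Set X,
    IsCompact Q ∧ IsSaturated Q ∧ IsClosed C ∧ L = Q ∩ C

/-- The space of lenses on `X`, with the Vietoris topology generated by
`□U` and `◇U`, `U` open. -/
def Lens (X : Type*) [TopologicalSpace X] := {L : Set X // IsLens L}

instance Lens.topology (X : Type*) [TopologicalSpace X] :
    TopologicalSpace (Lens X) :=
  TopologicalSpace.generateFrom
    ({s | ∃ U : Set X, IsOpen U ∧ s = {L : Lens X | L.1 ⊆ U}} ∪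
     {s | ∃ U : Set X, IsOpen U ∧ s = {L : Lens X | (L.1 ∩ U).Nonempty}})

/-- Upward closure in the specialization preorder. -/
def upCl {X : Type*} [TopologicalSpace X] (A : Set X) : Set X :=
  {y | ∃ x ∈ A, SpecLE x y}

/-- Downward closure in the specialization preorder. -/
def dnCl {X : Type*} [TopologicalSpace X] (A : Set X) : Set X :=
  {y | ∃ x ∈ A, SpecLE y x}

section Helpers

variable {X : Type*} [TopologicalSpace X]

lemma specLE_refl (x : X) : SpecLE x x := fun _ _ h => h

lemma subset_upCl (A : Set X) : A ⊆ upCl A := fun x hx => ⟨x, hx, specLE_refl x⟩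

lemma upCl_saturated (A : Set X) : IsSaturated (upCl A) := by
  rintro x y hxy ⟨z, hz, hzx⟩
  exact ⟨z, hz, fun U hU hzU => hxy U hU (hzx U hU hzU)⟩

lemma upCl_compact {K : Set X} (hK : IsCompact K) : IsCompact (upCl K) := by
  rw [isCompact_iff_finite_subcover] at hK ⊢
  intro ι U hU hcov
  obtain ⟨t, ht⟩ := hK U hU ((subset_upCl K).trans hcov)
  refine ⟨t, ?_⟩
  rintro y ⟨x, hx, hxy⟩
  obtain ⟨i, hi, hxi⟩ := mem_iUnion₂.1 (ht hx)
  exact mem_iUnion₂.2 ⟨i, hi, hxy _ (hU i) hxi⟩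

lemma mem_closure_singleton {x y : X} : y ∈ closure ({x} : Set X) ↔ SpecLE y x := by
  rw [mem_closure_iff]
  constructor
  · intro h U hU hyU
    obtain ⟨z, hzU, hz⟩ := h U hU hyU
    rwa [mem_singleton_iff.1 hz] at hzU
  · intro h U hU hyU
    exact ⟨x, h U hU hyU, rfl⟩

lemma dnCl_subset_closure (A : Set X) : dnCl A ⊆ closure A := by
  rintro y ⟨x, hx, hyx⟩
  rw [mem_closure_iff]
  exact fun U hU hyU => ⟨x, hyx U hU hyU, hx⟩

/-- A finite subset of a chain of sets has a lower bound in the chain. -/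
lemma chain_finset_lb {α : Type*} {c : Set (Set α)} (hc : IsChain (· ⊆ ·) c) {C0 : Set α}
    (hC0 : C0 ∈ c) (u : Finset (Set α)) : ↑u ⊆ c → ∃ D ∈ c, ∀ C ∈ u, D ⊆ C := by
  classical
  induction u using Finset.induction_on with
  | empty => exact fun _ => ⟨C0, hC0, by simp⟩
  | @insert a s ha ih =>
    intro hu
    have ha' : a ∈ c := hu (by simp)
    obtain ⟨D, hD, hDs⟩ := ih (fun C hC => hu (by simp [hC]))
    rcases eq_or_ne D a with rfl | hne
    · exact ⟨D, hD, fun C hC => by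
        rcases Finset.mem_insert.1 hC with rfl | hC
        · exact subset_rfl
        · exact hDs C hC⟩
    rcases hc hD ha' hne with h | h
    · exact ⟨D, hD, fun C hC => by
        rcases Finset.mem_insert.1 hC with rfl | hC
        · exact h
        · exact hDs C hC⟩
    · exact ⟨a, ha', fun C hC => by
        rcases Finset.mem_insert.1 hC with rfl | hC
        · exact subset_rfl
        · exact h.trans (hDs C hC)⟩

/-- Hofmann–Mislove style well-filteredness of sober spaces: if a directed
family of nonempty compact saturated sets has intersection contained in an
open set, then some member is contained in it. -/
lemma well_filtered [QuasiSober X] {ι : Type*} [Nonempty ι] (K : ι → Set X)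
    (hKc : ∀ i, IsCompact (K i)) (hKs : ∀ i, IsSaturated (K i))
    (hdir : ∀ i j, ∃ k, K k ⊆ K i ∩ K j) {U : Set X} (hU : IsOpen U)
    (hsub : ⋂ i, K i ⊆ U) : ∃ i, K i ⊆ U := by
  classical
  by_contra hcon
  push_neg at hcon
  have h' : ∀ i, (K i ∩ Uᶜ).Nonempty := by
    intro i
    obtain ⟨x, hx, hxU⟩ := not_subset.1 (hcon i)
    exact ⟨x, hx, hxU⟩
  set S : Set (Set X) := {C | IsClosed C ∧ ∀ i, (K i ∩ C).Nonempty} with hS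
  have hUc : Uᶜ ∈ S := ⟨hU.isClosed_compl, h'⟩
  have hchain : ∀ c ⊆ S, IsChain (· ⊆ ·) c → c.Nonempty →
      ∃ lb ∈ S, ∀ s ∈ c, lb ⊆ s := by
    rintro c hcS hch ⟨C0, hC0⟩
    refine ⟨⋂₀ c, ⟨isClosed_sInter fun C hC => (hcS hC).1, fun i => ?_⟩,
      fun s hs => sInter_subset_of_mem hs⟩
    rw [sInter_eq_iInter]
    apply (hKc i).inter_iInter_nonempty (fun C : c => (C : Set X))
      (fun C => (hcS C.2).1)
    intro u
    obtain ⟨D, hD, hDs⟩ := chain_finset_lb hch hC0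
      (u.image (fun C : c => (C : Set X)))
      (by
        intro C hC
        simp only [Finset.coe_image, mem_image] at hC
        obtain ⟨E, _, rfl⟩ := hC
        exact E.2)
    obtain ⟨x, hxK, hxD⟩ := (hcS hD).2 i
    refine ⟨x, hxK, mem_iInter₂.2 fun C hC => ?_⟩
    exact hDs _ (Finset.mem_image_of_mem _ hC) hxD
  obtain ⟨m, hmU, hmS, hmin⟩ := zorn_superset_nonempty S hchain Uᶜ hUc
  obtain ⟨i0⟩ := ‹Nonempty ι›
  obtain ⟨z0, _, hz0m⟩ := hmS.2 i0
  have hirr : IsIrreducible m := by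
    refine ⟨⟨z0, hz0m⟩, ?_⟩
    rintro u v hu hv ⟨a, ham, hau⟩ ⟨b, hbm, hbv⟩
    by_contra hempty
    rw [Set.not_nonempty_iff_eq_empty] at hempty
    have hAS : (m ∩ uᶜ) ∉ S := by
      intro hA
      have := hmin hA inter_subset_left
      exact (this ham).2 hau
    have hBS : (m ∩ vᶜ) ∉ S := by
      intro hB
      have := hmin hB inter_subset_left
      exact (this hbm).2 hbv
    simp only [hS, mem_setOf_eq, not_and, not_forall] at hAS hBS
    obtain ⟨i, hi⟩ := hAS (hmS.1.inter hu.isClosed_compl)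
    obtain ⟨j, hj⟩ := hBS (hmS.1.inter hv.isClosed_compl)
    obtain ⟨k, hk⟩ := hdir i j
    obtain ⟨x, hxK, hxm⟩ := hmS.2 k
    by_cases hxu : x ∈ u
    · by_cases hxv : x ∈ v
      · exact absurd (hempty ▸ ⟨hxm, hxu, hxv⟩ : x ∈ (∅ : Set X)) (notMem_empty x)
      · exact hj ⟨x, (hk hxK).2, hxm, hxv⟩
    · exact hi ⟨x, (hk hxK).1, hxm, hxu⟩
  obtain ⟨x, hx⟩ := QuasiSober.sober hirr hmS.1
  have hxm : x ∈ m := hx.mem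
  have hxK : ∀ i, x ∈ K i := by
    intro i
    obtain ⟨z, hzK, hzm⟩ := hmS.2 i
    have : z ∈ closure ({x} : Set X) := by rw [hx.def]; exact hzm
    exact hKs i (mem_closure_singleton.1 this) hzK
  exact (hmU hxm) (hsub (mem_iInter.2 hxK))

end Helpers

/-- On a stably compact space (sober, locally compact, compact, coherent),
the closure of every lens equals its downward closure, and the maps
`ϖ₁ : L ↦ ↑L` into the Smyth hyperspace and `ϖ₂ : L ↦ cl L` into the Hoare
hyperspace are well defined and continuous. -/
theorem lens_projections_continuous {X : Type*} [TopologicalSpace X]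
    [T0Space X] [QuasiSober X] [LocallyCompactSpace X] [CompactSpace X]
    (hcoherent : ∀ Q₁ Q₂ : Set X, IsCompact Q₁ → IsSaturated Q₁ →
      IsCompact Q₂ → IsSaturated Q₂ → IsCompact (Q₁ ∩ Q₂)) :
    (∀ L : Lens X, closure L.1 = dnCl L.1) ∧
    (∃ f : Lens X → Smyth X, (∀ L : Lens X, (f L).1 = upCl L.1) ∧ Continuous f) ∧
    (∃ g : Lens X → Hoare X, (∀ L : Lens X, (g L).1 = closure L.1) ∧ Continuous g) := by
  refine ⟨?_, ?_, ?_⟩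
  · -- closure L = dnCl L
    intro L
    obtain ⟨hne, Q, C, hQc, hQs, hCc, hLQC⟩ := L.2
    apply subset_antisymm _ (dnCl_subset_closure _)
    intro y hy
    by_contra hy'
    -- index type: compact saturated neighborhoods of y
    let ι := {K : Set X // IsCompact K ∧ IsSaturated K ∧ K ∈ nhds y}
    have : Nonempty ι := ⟨⟨univ, isCompact_univ, fun _ _ _ h => h, Filter.univ_mem⟩⟩
    let F : ι → Set X := fun i => i.1 ∩ Q
    have hFc : ∀ i, IsCompact (F i) := fun i =>
      hcoherent _ _ i.2.1 i.2.2.1 hQc hQs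
    have hFs : ∀ i, IsSaturated (F i) := fun i => by
      rintro a b hab ⟨ha1, ha2⟩
      exact ⟨i.2.2.1 hab ha1, hQs hab ha2⟩
    have hdir : ∀ i j, ∃ k, F k ⊆ F i ∩ F j := by
      intro i j
      refine ⟨⟨i.1 ∩ j.1, hcoherent _ _ i.2.1 i.2.2.1 j.2.1 j.2.2.1,
        fun a b hab ⟨h1, h2⟩ => ⟨i.2.2.1 hab h1, j.2.2.1 hab h2⟩,
        Filter.inter_mem i.2.2.2 j.2.2.2⟩, ?_⟩
      rintro z ⟨⟨hz1, hz2⟩, hzQ⟩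
      exact ⟨⟨hz1, hzQ⟩, hz2, hzQ⟩
    have hsub : ⋂ i, F i ⊆ Cᶜ := by
      intro z hz
      have hzQ : z ∈ Q := (mem_iInter.1 hz ⟨univ, isCompact_univ,
        fun _ _ _ h => h, Filter.univ_mem⟩).2
      have hyz : SpecLE y z := by
        intro V hV hyV
        by_contra hzV
        obtain ⟨K, hKn, hKV, hKc⟩ := local_compact_nhds (hV.mem_nhds hyV)
        have hiK : upCl K ∈ nhds y := Filter.mem_of_superset hKn (subset_upCl K)
        have := (mem_iInter.1 hz ⟨upCl K, upCl_compact hKc, upCl_saturated K, hiK⟩).1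
        obtain ⟨w, hwK, hwz⟩ := this
        exact hzV (hwz V hV (hKV hwK))
      intro hzC
      exact hy' ⟨z, by rw [hLQC]; exact ⟨hzQ, hzC⟩, hyz⟩
    obtain ⟨i, hi⟩ := well_filtered F hFc hFs hdir hCc.isOpen_compl hsub
    -- but y ∈ closure L and interior i.1 is an open neighborhood of y
    have hyint : y ∈ interior i.1 := mem_interior_iff_mem_nhds.2 i.2.2.2
    obtain ⟨x, hxint, hxL⟩ := mem_closure_iff.1 hy _ isOpen_interior hyint
    have hxQC : x ∈ Q ∩ C := by rw [← hLQC]; exact hxL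
    exact hi ⟨interior_subset hxint, hxQC.1⟩ hxQC.2
  · -- the Smyth projection
    have hwd : ∀ L : Lens X,
        IsCompact (upCl L.1) ∧ IsSaturated (upCl L.1) ∧ (upCl L.1).Nonempty := by
      intro L
      obtain ⟨⟨w, hw⟩, Q, C, hQc, hQs, hCc, hLQC⟩ := L.2
      exact ⟨upCl_compact (by rw [hLQC]; exact hQc.inter_right hCc),
        upCl_saturated _, ⟨w, subset_upCl _ hw⟩⟩
    refine ⟨fun L => ⟨upCl L.1, hwd L⟩, fun L => rfl, ?_⟩
    · refine continuous_generateFrom_iff.2 ?_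
      rintro s ⟨U, hU, rfl⟩
      have : (fun L : Lens X => (⟨upCl L.1, hwd L⟩ : Smyth X)) ⁻¹'
          {Q : Smyth X | Q.1 ⊆ U} = {L : Lens X | L.1 ⊆ U} := by
        ext L
        simp only [mem_preimage, mem_setOf_eq]
        constructor
        · exact fun h => (subset_upCl L.1).trans h
        · rintro h z ⟨x, hx, hxz⟩
          exact hxz U hU (h hx)
      refine (congrArg IsOpen this).mpr ?_
      exact isOpen_generateFrom_of_mem (Or.inl ⟨U, hU, rfl⟩)
  · -- the Hoare projection
    refine ⟨fun L => ⟨closure L.1, isClosed_closure, L.2.1.closure⟩, fun L => rfl, ?_⟩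
    refine continuous_generateFrom_iff.2 ?_
    rintro s ⟨U, hU, rfl⟩
    have : (fun L : Lens X => (⟨closure L.1, isClosed_closure, L.2.1.closure⟩ : Hoare X)) ⁻¹'
        {C : Hoare X | (C.1 ∩ U).Nonempty} = {L : Lens X | (L.1 ∩ U).Nonempty} := by
      ext L
      simp only [mem_preimage, mem_setOf_eq]
      constructor
      · rintro ⟨z, hzc, hzU⟩
        obtain ⟨x, hxU, hxL⟩ := mem_closure_iff.1 hzc U hU hzU
        exact ⟨x, hxL, hxU⟩
      · rintro ⟨x, hxL, hxU⟩
        exact ⟨x, subset_closure hxL, hxU⟩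
    refine (congrArg IsOpen this).mpr ?_
    exact isOpen_generateFrom_of_mem (Or.inr ⟨U, hU, rfl⟩)
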